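/- Let κ > 0 and j ∈ ℝ, and let h : ℝ → ℝ satisfy h(t) = (κ/2) t² + (j/6) t³ + o(t³) as t → 0. Let ε₀ > 0 and let t_N : (0, ε₀) → ℝ be a function with t_N(ε) < 0 for all ε ∈ (0, ε₀), t_N(ε) → 0 as ε → 0⁺, and h(t_N(ε)) = ε for all ε ∈ (0, ε₀). Then t_N(ε) = −√(2ε/κ) − (j/(3κ²)) ε + o(ε) as ε → 0⁺. -/

import Mathlib

open Asymptotics Filter

/-- If h(t) = (κ/2)t² + (j/6)t³ + o(t³) with κ > 0, and t_N(ε) < 0 satisfies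
t_N(ε) → 0 as ε → 0⁺ and h(t_N(ε)) = ε on (0, ε₀), then
t_N(ε) = −√(2ε/κ) − (j/(3κ²))ε + o(ε) as ε → 0⁺. -/
theorem stmt_8 (κ j : ℝ) (hκ : 0 < κ) (h : ℝ → ℝ)
    (hh : (fun t : ℝ => h t - (κ / 2 * t ^ 2 + j / 6 * t ^ 3)) =o[nhds 0]
      fun t : ℝ => t ^ 3)
    (ε₀ : ℝ) (hε₀ : 0 < ε₀) (tN : ℝ → ℝ)
    (hneg : ∀ ε ∈ Set.Ioo 0 ε₀, tN ε < 0)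
    (hlim : Tendsto tN (nhdsWithin 0 (Set.Ioi 0)) (nhds 0))
    (hroot : ∀ ε ∈ Set.Ioo 0 ε₀, h (tN ε) = ε) :
    (fun ε : ℝ => tN ε - (-Real.sqrt (2 * ε / κ) - j / (3 * κ ^ 2) * ε))
      =o[nhdsWithin 0 (Set.Ioi 0)] fun ε : ℝ => ε := by
  set l := nhdsWithin (0:ℝ) (Set.Ioi 0) with hl
  set r : ℝ → ℝ := fun t => h t - (κ / 2 * t ^ 2 + j / 6 * t ^ 3) with hrdef
  have hmem : ∀ᶠ ε in l, ε ∈ Set.Ioo 0 ε₀ := Ioo_mem_nhdsGT_of_mem ⟨le_refl 0, hε₀⟩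
  -- rho → 0
  have hρ : Tendsto (fun ε => r (tN ε) / (tN ε)^3) l (nhds 0) :=
    (hh.comp_tendsto hlim).tendsto_div_nhds_zero
  -- basic eventual facts
  have hev : ∀ᶠ ε in l, (0 < ε ∧ tN ε < 0) ∧
      κ/2*(tN ε)^2 + j/6*(tN ε)^3 + r (tN ε) = ε := by
    filter_upwards [hmem] with ε hε
    have h2 := hroot ε hε
    exact ⟨⟨hε.1, hneg ε hε⟩, by simp only [hrdef]; linarith⟩
  -- ε / t² → κ/2
  have hE : Tendsto (fun ε => ε / (tN ε)^2) l (nhds (κ/2)) := by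
    have h1 : Tendsto (fun ε => κ/2 + (j/6 * tN ε + (r (tN ε)/(tN ε)^3) * tN ε)) l
        (nhds (κ/2 + 0)) := by
      refine tendsto_const_nhds.add ?_
      simpa using (hlim.const_mul (j/6)).add (hρ.mul hlim)
    rw [add_zero] at h1
    refine h1.congr' ?_
    filter_upwards [hev, hmem] with ε ⟨⟨hε0, ht⟩, heq⟩ hε
    have htne : tN ε ≠ 0 := ht.ne
    have heq2 : h (tN ε) = ε := hroot ε hε
    field_simp
    linear_combination 12 * heq2
  have hT2 : Tendsto (fun ε => (tN ε)^2 / ε) l (nhds ((κ/2)⁻¹)) := by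
    simpa [inv_div] using hE.inv₀ (by positivity)
  -- q → 1
  set q : ℝ → ℝ := fun ε => -tN ε / Real.sqrt (2*ε/κ) with hqdef
  have hq2 : Tendsto (fun ε => (q ε)^2) l (nhds 1) := by
    have h2 := hT2.const_mul (κ/2)
    rw [mul_inv_cancel₀ (by positivity : (κ:ℝ)/2 ≠ 0)] at h2
    refine h2.congr' ?_
    filter_upwards [hev] with ε ⟨⟨hε0, ht⟩, _⟩
    have hs2 : Real.sqrt (2*ε/κ)^2 = 2*ε/κ := Real.sq_sqrt (by positivity)
    have hsne : Real.sqrt (2*ε/κ) ≠ 0 := by positivity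
    simp only [hqdef, div_pow, neg_sq, hs2]
    field_simp
  have hq1 : Tendsto q l (nhds 1) := by
    have hcont := (Real.continuous_sqrt.tendsto 1).comp hq2
    rw [Real.sqrt_one] at hcont
    refine hcont.congr' ?_
    filter_upwards [hev] with ε ⟨⟨hε0, ht⟩, _⟩
    have hs : 0 < Real.sqrt (2*ε/κ) := Real.sqrt_pos.mpr (by positivity)
    have hq0 : 0 ≤ q ε := div_nonneg (by linarith) hs.le
    show Real.sqrt ((q ε)^2) = q ε
    exact Real.sqrt_sq hq0
  -- B → -1/κ
  have hB : Tendsto (fun ε => (tN ε)^3 / (ε * (Real.sqrt (2*ε/κ) - tN ε))) l (nhds (-1/κ)) := by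
    have hlim2 : Tendsto (fun ε => -(q ε)^3 * (2/κ) / (1 + q ε)) l
        (nhds (-(1:ℝ)^3 * (2/κ) / (1+1))) :=
      ((hq1.pow 3).neg.mul_const (2/κ)).div (tendsto_const_nhds.add hq1) (by norm_num)
    have hval : (-(1:ℝ)^3 * (2/κ) / (1+1)) = -1/κ := by
      field_simp
      ring
    rw [hval] at hlim2
    refine hlim2.congr' ?_
    filter_upwards [hev] with ε ⟨⟨hε0, ht⟩, _⟩
    set s := Real.sqrt (2*ε/κ) with hsdef
    have hs : 0 < s := Real.sqrt_pos.mpr (by positivity)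
    have hs2 : s^2 = 2*ε/κ := Real.sq_sqrt (by positivity)
    have hst : s - tN ε ≠ 0 := sub_ne_zero.mpr ((by linarith : tN ε < s).ne')
    have htne : tN ε ≠ 0 := ht.ne
    have h1q : (0:ℝ) < 1 + q ε := by
      have : 0 < q ε := div_pos (by linarith) hs
      linarith
    have e1 : -(q ε)^3 * (2/κ) / (1 + q ε) = (tN ε)^3 * (2/κ) / (s^2 * (s - tN ε)) := by
      rw [div_eq_div_iff h1q.ne' (by positivity)]
      simp only [hqdef, ← hsdef]
      field_simp
      ring
    rw [e1, hs2]
    rw [div_eq_div_iff (by positivity) (by positivity)]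
    field_simp
  -- final assembly
  have hε0' : ∀ᶠ ε in l, (0:ℝ) < ε := by
    filter_upwards [hmem] with ε hε; exact hε.1
  rw [isLittleO_iff_tendsto' (by filter_upwards [hε0'] with ε hε h0; exact absurd h0 hε.ne')]
  have hfin : Tendsto (fun ε => (j/(3*κ) + (2/κ)*(r (tN ε)/(tN ε)^3)) *
      ((tN ε)^3/(ε*(Real.sqrt (2*ε/κ) - tN ε))) + j/(3*κ^2)) l
      (nhds ((j/(3*κ) + (2/κ)*0) * (-1/κ) + j/(3*κ^2))) :=
    ((tendsto_const_nhds.add (hρ.const_mul _)).mul hB).add tendsto_const_nhds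
  have hval : (j/(3*κ) + (2/κ)*0) * (-1/κ) + j/(3*κ^2) = 0 := by
    field_simp
    ring
  rw [hval] at hfin
  refine hfin.congr' ?_
  filter_upwards [hev] with ε ⟨⟨hε0, ht⟩, heq⟩
  have htne : tN ε ≠ 0 := ht.ne
  set s := Real.sqrt (2*ε/κ) with hsdef
  have hs : 0 < s := Real.sqrt_pos.mpr (by positivity)
  have hs2 : s^2 = 2*ε/κ := Real.sq_sqrt (by positivity)
  have hs2' : κ * s^2 = 2*ε := by
    rw [hs2]; field_simp
  have hst : s - tN ε ≠ 0 :=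
    sub_ne_zero.mpr ((by linarith : tN ε < s).ne')
  have key : 3 * κ * ((tN ε + s) * (s - tN ε))
      = j*(tN ε)^3 + 6*(r (tN ε)) := by
    linear_combination 3 * hs2' - 6 * heq
  field_simp
  linear_combination (κ*(s - tN ε)) * key + (6*κ*(s - tN ε) + 6*κ) * heq + (3*κ*(tN ε - s) - 3*κ) * hs2'
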